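/- Let R be a commutative ring of prime characteristic p, let x_1, ..., x_d ∈ R and let J be an ideal such that R/(J + (x_1,...,x_d)) has finite length. Then the length of R/(J + (x_1^p, ..., x_d^p)) is at most p^d times the length of R/(J + (x_1, ..., x_d)). -/

import Mathlib

/-- The length of a module, defined as the Krull dimension of its lattice of submodules. -/
noncomputable def moduleLength (R M : Type*) [Ring R] [AddCommGroup M] [Module R M] :
    WithBot ℕ∞ :=
  Order.krullDim (Submodule R M)

section Aux

open Order

lemma aux_height_add_one_le {α : Type*} [Preorder α] {a b : α} (h : a < b) :
    Order.height a + 1 ≤ Order.height b := by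
  rw [Order.height_eq_iSup_lt_height b]
  exact le_iSup₂_of_le a h le_rfl

variable {R M M' : Type*} [Ring R] [AddCommGroup M] [Module R M]
  [AddCommGroup M'] [Module R M']

/-- Length of a module, as an element of `ℕ∞`. -/
noncomputable def auxLen (R M : Type*) [Ring R] [AddCommGroup M] [Module R M] : ℕ∞ :=
  Order.height (⊤ : Submodule R M)

lemma moduleLength_eq_auxLen : moduleLength R M = (auxLen R M : WithBot ℕ∞) :=
  (Order.height_top_eq_krullDim).symm

lemma auxLen_le_of_surjective (f : M →ₗ[R] M') (hf : Function.Surjective f) :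
    auxLen R M' ≤ auxLen R M := by
  have hsm : StrictMono (Submodule.comap f) := fun S T h =>
    (Submodule.comap_mono h.le).lt_of_ne
      (fun he => h.ne (Submodule.comap_injective_of_surjective hf he))
  have := Order.height_le_height_apply_of_strictMono _ hsm (⊤ : Submodule R M')
  simpa [Submodule.comap_top, auxLen] using this

lemma auxLen_eq_of_equiv (e : M ≃ₗ[R] M') : auxLen R M = auxLen R M' :=
  le_antisymm (auxLen_le_of_surjective e.symm.toLinearMap e.symm.surjective)
    (auxLen_le_of_surjective e.toLinearMap e.surjective)

lemma aux_comap_lt_or_map_lt {N S T : Submodule R M} (h : S < T) :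
    S.comap N.subtype < T.comap N.subtype ∨ S.map N.mkQ < T.map N.mkQ := by
  by_contra hc
  push_neg at hc
  have h1 : S.comap N.subtype = T.comap N.subtype :=
    ((Submodule.comap_mono h.le).lt_or_eq).resolve_left hc.1
  have h2 : S.map N.mkQ = T.map N.mkQ :=
    ((Submodule.map_mono h.le).lt_or_eq).resolve_left hc.2
  refine h.ne (le_antisymm h.le ?_)
  intro x hxT
  have hx : N.mkQ x ∈ S.map N.mkQ := h2 ▸ Submodule.mem_map_of_mem hxT
  obtain ⟨y, hyS, hy⟩ := hx
  have hxy : x - y ∈ N :=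
    (Submodule.Quotient.eq N).mp (by simpa [Submodule.mkQ_apply] using hy.symm)
  have hxyT : x - y ∈ T := T.sub_mem hxT (h.le hyS)
  have hmem : (⟨x - y, hxy⟩ : N) ∈ T.comap N.subtype := by
    simpa using hxyT
  rw [← h1] at hmem
  have hxyS : x - y ∈ S := hmem
  have := S.add_mem hyS hxyS
  simpa using this

lemma auxLen_le_add (N : Submodule R M) :
    auxLen R M ≤ auxLen R N + auxLen R (M ⧸ N) := by
  apply Order.height_le
  intro p _
  have key : ∀ n : ℕ, ∀ hn : n ≤ p.length,
      (n : ℕ∞) ≤ Order.height ((p ⟨n, Nat.lt_succ_of_le hn⟩).comap N.subtype) +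
        Order.height ((p ⟨n, Nat.lt_succ_of_le hn⟩).map N.mkQ) := by
    intro n
    induction n with
    | zero => intro _; simp
    | succ k ih =>
      intro hn
      have hk := ih (Nat.le_of_succ_le hn)
      have hlt : p ⟨k, by omega⟩ < p ⟨k + 1, Nat.lt_succ_of_le hn⟩ :=
        p.strictMono (by simp [Fin.lt_def])
      have mono1 : Order.height ((p ⟨k, by omega⟩).comap N.subtype)
          ≤ Order.height ((p ⟨k + 1, Nat.lt_succ_of_le hn⟩).comap N.subtype) :=
        Order.height_mono (Submodule.comap_mono hlt.le)
      have mono2 : Order.height ((p ⟨k, by omega⟩).map N.mkQ)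
          ≤ Order.height ((p ⟨k + 1, Nat.lt_succ_of_le hn⟩).map N.mkQ) :=
        Order.height_mono (Submodule.map_mono hlt.le)
      rcases aux_comap_lt_or_map_lt (N := N) hlt with h | h
      · calc ((k + 1 : ℕ) : ℕ∞) = (k : ℕ∞) + 1 := by push_cast; ring
        _ ≤ (Order.height ((p ⟨k, by omega⟩).comap N.subtype) +
              Order.height ((p ⟨k, by omega⟩).map N.mkQ)) + 1 := by
            exact add_le_add hk le_rfl
        _ = (Order.height ((p ⟨k, by omega⟩).comap N.subtype) + 1) +
              Order.height ((p ⟨k, by omega⟩).map N.mkQ) := by ring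
        _ ≤ _ := add_le_add (aux_height_add_one_le h) mono2
      · calc ((k + 1 : ℕ) : ℕ∞) = (k : ℕ∞) + 1 := by push_cast; ring
        _ ≤ (Order.height ((p ⟨k, by omega⟩).comap N.subtype) +
              Order.height ((p ⟨k, by omega⟩).map N.mkQ)) + 1 := by
            exact add_le_add hk le_rfl
        _ = Order.height ((p ⟨k, by omega⟩).comap N.subtype) +
              (Order.height ((p ⟨k, by omega⟩).map N.mkQ) + 1) := by ring
        _ ≤ _ := add_le_add mono1 (aux_height_add_one_le h)
  have := key p.length le_rfl
  refine this.trans (add_le_add ?_ ?_) <;>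
    exact Order.height_mono le_top

lemma auxLen_subsingleton [Subsingleton M] : auxLen R M = 0 := by
  rw [auxLen, Order.height_eq_zero]
  intro S _
  exact le_of_eq (Subsingleton.elim _ _)

end Aux

section IdealLen

variable {R : Type*} [CommRing R]

/-- Length of `R ⧸ I`. -/
noncomputable def idLen (I : Ideal R) : ℕ∞ := auxLen R (R ⧸ I)

lemma idLen_anti {I K : Ideal R} (h : I ≤ K) : idLen K ≤ idLen I := by
  refine auxLen_le_of_surjective (Submodule.mapQ I K LinearMap.id h) ?_
  intro z
  obtain ⟨r, rfl⟩ := Submodule.mkQ_surjective K z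
  exact ⟨Submodule.Quotient.mk r, by rw [Submodule.mapQ_apply]; rfl⟩

lemma idLen_top : idLen (⊤ : Ideal R) = 0 := by
  have : Subsingleton (R ⧸ (⊤ : Ideal R)) :=
    Submodule.Quotient.subsingleton_iff.mpr rfl
  exact auxLen_subsingleton

lemma idLen_sup_mul_le (I : Ideal R) (y z : R) :
    idLen (I ⊔ Ideal.span {y * z}) ≤ idLen (I ⊔ Ideal.span {z}) + idLen (I ⊔ Ideal.span {y}) := by
  set a : Ideal R := I ⊔ Ideal.span {y * z} with ha
  set b : Ideal R := I ⊔ Ideal.span {z} with hb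
  have hab : a ≤ b := by
    refine sup_le le_sup_left (le_trans ?_ le_sup_right)
    rw [Ideal.span_singleton_le_iff_mem]
    exact Ideal.mem_span_singleton.mpr ⟨y, mul_comm y z⟩
  -- N : image of b in R ⧸ a
  set N : Submodule R (R ⧸ a) := Submodule.map a.mkQ b with hN
  have h1 : idLen a ≤ auxLen R N + auxLen R ((R ⧸ a) ⧸ N) := auxLen_le_add N
  -- (R ⧸ a) ⧸ N ≃ R ⧸ b
  have h2 : auxLen R ((R ⧸ a) ⧸ N) = idLen b :=
    auxLen_eq_of_equiv (Submodule.quotientQuotientEquivQuotient a b hab)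
  -- N is a quotient of R ⧸ (I ⊔ span {y})
  set c : Ideal R := I ⊔ Ideal.span {y} with hc
  have h3 : auxLen R N ≤ idLen c := by
    -- φ : R →ₗ R ⧸ a, r ↦ mk (r * z)
    set φ : R →ₗ[R] R ⧸ a := LinearMap.toSpanSingleton R (R ⧸ a) (a.mkQ z) with hφ
    have hφr : ∀ r : R, φ r = Submodule.Quotient.mk (r * z) := by
      intro r
      rw [hφ, LinearMap.toSpanSingleton_apply, Submodule.mkQ_apply, ← Submodule.Quotient.mk_smul,
        smul_eq_mul]
    have hker : c ≤ LinearMap.ker φ := by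
      refine sup_le ?_ ?_
      · intro r hr
        rw [LinearMap.mem_ker, hφr, Submodule.Quotient.mk_eq_zero]
        exact le_sup_left (α := Ideal R) (Ideal.mul_mem_right z _ hr)
      · rw [Ideal.span_singleton_le_iff_mem, LinearMap.mem_ker, hφr,
          Submodule.Quotient.mk_eq_zero]
        exact le_sup_right (α := Ideal R) (Ideal.mem_span_singleton_self _)
    set ψ : R ⧸ c →ₗ[R] R ⧸ a := Submodule.liftQ c φ hker with hψ
    have hrange : LinearMap.range ψ = N := by
      have hrψ : LinearMap.range ψ = LinearMap.range φ := Submodule.range_liftQ _ _ _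
      rw [hrψ]
      have hrφ : LinearMap.range φ = Submodule.span R {a.mkQ z} :=
        (LinearMap.span_singleton_eq_range R (R ⧸ a) (a.mkQ z)).symm
      rw [hrφ, hN, hb]
      ext w
      simp only [Submodule.mem_map]
      constructor
      · intro hw
        rw [Submodule.mem_span_singleton] at hw
        obtain ⟨r, rfl⟩ := hw
        refine ⟨r * z, le_sup_right (α := Ideal R)
          (Ideal.mul_mem_left _ r (Ideal.mem_span_singleton_self z)), ?_⟩
        rw [Submodule.mkQ_apply, ← hφr r, hφ, LinearMap.toSpanSingleton_apply,
          Submodule.mkQ_apply]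
      · rintro ⟨r, hr, rfl⟩
        rcases Submodule.mem_sup.mp hr with ⟨u, hu, v, hv, rfl⟩
        have hu0 : a.mkQ u = 0 := by
          rw [Submodule.mkQ_apply, Submodule.Quotient.mk_eq_zero]
          exact le_sup_left (α := Ideal R) hu
        rw [Ideal.mem_span_singleton] at hv
        obtain ⟨s, rfl⟩ := hv
        rw [Submodule.mem_span_singleton]
        refine ⟨s, ?_⟩
        have : a.mkQ (u + z * s) = a.mkQ (s * z) := by
          rw [map_add, hu0, zero_add, mul_comm]
        rw [this, ← smul_eq_mul, map_smul]
    have := auxLen_le_of_surjective ψ.rangeRestrict (LinearMap.surjective_rangeRestrict ψ)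
    rw [hrange] at this
    exact this
  calc idLen a ≤ auxLen R N + auxLen R ((R ⧸ a) ⧸ N) := h1
    _ = auxLen R N + idLen b := by rw [h2]
    _ ≤ idLen c + idLen b := add_le_add h3 le_rfl
    _ = idLen b + idLen c := add_comm _ _

lemma idLen_sup_pow_le (I : Ideal R) (y : R) (n : ℕ) :
    idLen (I ⊔ Ideal.span {y ^ n}) ≤ n * idLen (I ⊔ Ideal.span {y}) := by
  induction n with
  | zero =>
    simp only [pow_zero, Ideal.span_singleton_one, sup_top_eq, idLen_top, Nat.cast_zero,
      zero_mul, le_refl]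
  | succ k ih =>
    have hk : idLen (I ⊔ Ideal.span {y * y ^ k}) ≤
        idLen (I ⊔ Ideal.span {y ^ k}) + idLen (I ⊔ Ideal.span {y}) :=
      idLen_sup_mul_le I y (y ^ k)
    rw [← pow_succ'] at hk
    calc idLen (I ⊔ Ideal.span {y ^ (k + 1)})
        ≤ idLen (I ⊔ Ideal.span {y ^ k}) + idLen (I ⊔ Ideal.span {y}) := hk
      _ ≤ (k : ℕ∞) * idLen (I ⊔ Ideal.span {y}) + idLen (I ⊔ Ideal.span {y}) :=
          add_le_add ih le_rfl
      _ = ((k + 1 : ℕ) : ℕ∞) * idLen (I ⊔ Ideal.span {y}) := by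
          push_cast; ring

lemma idLen_frobenius_le (p : ℕ) :
    ∀ (d : ℕ) (J : Ideal R) (x : Fin d → R),
    idLen (J ⊔ Ideal.span (Set.range fun i => x i ^ p)) ≤
      (p ^ d : ℕ) * idLen (J ⊔ Ideal.span (Set.range x)) := by
  intro d
  induction d with
  | zero =>
    intro J x
    simp [Set.range_eq_empty, Ideal.span_empty]
  | succ d ih =>
    intro J x
    have hr1 : Set.range (fun i => x i ^ p) =
        insert (x 0 ^ p) (Set.range fun i : Fin d => x i.succ ^ p) := by
      rw [Fin.range_fin_succ (fun i => x i ^ p)]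
      rfl
    have hr2 : Set.range x = insert (x 0) (Set.range fun i : Fin d => x i.succ) := by
      rw [Fin.range_fin_succ x]
      rfl
    set K : Ideal R := J ⊔ Ideal.span (Set.range fun i : Fin d => x i.succ ^ p) with hK
    have e1 : J ⊔ Ideal.span (Set.range fun i => x i ^ p)
        = K ⊔ Ideal.span {x 0 ^ p} := by
      rw [hr1, Ideal.span_insert, hK]
      rw [sup_comm (Ideal.span {x 0 ^ p}) _, ← sup_assoc]
    have step1 : idLen (J ⊔ Ideal.span (Set.range fun i => x i ^ p)) ≤
        (p : ℕ∞) * idLen (K ⊔ Ideal.span {x 0}) := by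
      rw [e1]
      have := idLen_sup_pow_le K (x 0) p
      simpa using this
    have e2 : K ⊔ Ideal.span {x 0} =
        (J ⊔ Ideal.span {x 0}) ⊔ Ideal.span (Set.range fun i : Fin d => x i.succ ^ p) := by
      rw [hK, sup_assoc, sup_assoc, sup_comm (Ideal.span _) (Ideal.span {x 0})]
    have step2 : idLen (K ⊔ Ideal.span {x 0}) ≤
        (p ^ d : ℕ) * idLen ((J ⊔ Ideal.span {x 0}) ⊔
          Ideal.span (Set.range fun i : Fin d => x i.succ)) := by
      rw [e2]
      exact ih (J ⊔ Ideal.span {x 0}) (fun i => x i.succ)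
    have e3 : (J ⊔ Ideal.span {x 0}) ⊔ Ideal.span (Set.range fun i : Fin d => x i.succ)
        = J ⊔ Ideal.span (Set.range x) := by
      rw [hr2, Ideal.span_insert, ← sup_assoc]
    rw [e3] at step2
    calc idLen (J ⊔ Ideal.span (Set.range fun i => x i ^ p))
        ≤ (p : ℕ∞) * idLen (K ⊔ Ideal.span {x 0}) := step1
      _ ≤ (p : ℕ∞) * ((p ^ d : ℕ) * idLen (J ⊔ Ideal.span (Set.range x))) :=
          by gcongr
      _ = ((p ^ (d + 1) : ℕ) : ℕ∞) * idLen (J ⊔ Ideal.span (Set.range x)) := by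
          rw [← mul_assoc]; push_cast; ring_nf

end IdealLen

theorem stmt_10 {R : Type*} [CommRing R] [IsNoetherianRing R]
    (p : ℕ) [Fact p.Prime] [CharP R p]
    {d : ℕ} (x : Fin d → R) (J : Ideal R)
    (hfl : IsFiniteLength R (R ⧸ (J ⊔ Ideal.span (Set.range x)))) :
    moduleLength R (R ⧸ (J ⊔ Ideal.span (Set.range fun i => x i ^ p))) ≤
      ((p ^ d : ℕ) : WithBot ℕ∞) *
        moduleLength R (R ⧸ (J ⊔ Ideal.span (Set.range x))) := by
  have key := idLen_frobenius_le (R := R) p d J x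
  rw [moduleLength_eq_auxLen, moduleLength_eq_auxLen]
  have hcast : ((p ^ d : ℕ) : WithBot ℕ∞) = (((p ^ d : ℕ) : ℕ∞) : WithBot ℕ∞) := by
    push_cast
    rfl
  rw [hcast, ← WithBot.coe_mul, WithBot.coe_le_coe]
  exact key
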